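/- Let μ, ν ∈ C be such that ν − μ ∈ C*, i.e. ⟨ν − μ, ρ⟩ ≥ 0 for every ρ ∈ C. Then for every nondecreasing, convex, Lipschitz function φ : ℝ → ℝ, one has ∫₀¹ φ( μ(s) ) ds ≤ ∫₀¹ φ( ν(s) ) ds. -/

import Mathlib

open MeasureTheory

/-- Lebesgue measure restricted to `[0,1)`. -/
noncomputable def mu0 : Measure ℝ := volume.restrict (Set.Ico (0 : ℝ) 1)

/-- The Hilbert space `H = L²([0,1))`. -/
noncomputable abbrev Hsp : Type := Lp ℝ 2 mu0

/-- The cone `C ⊂ H` of (classes of) functions with a nondecreasing nonnegative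
representative on `[0,1)`. -/
def coneC : Set Hsp :=
  {f | ∃ g : ℝ → ℝ, MonotoneOn g (Set.Ico 0 1) ∧ (∀ x ∈ Set.Ico (0 : ℝ) 1, 0 ≤ g x) ∧
    (f : ℝ → ℝ) =ᵐ[mu0] g}


/-- The dual cone `C*` of `C` in `H`. -/
noncomputable def dualC : Set Hsp := {ι | ∀ ρ ∈ coneC, 0 ≤ inner (𝕜 := ℝ) ι ρ}


section lderiv

variable (φ : ℝ → ℝ)

/-- Left derivative (sup of left slopes) of a function. -/
noncomputable def lderiv (x : ℝ) : ℝ :=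
  sSup ((fun z => (φ x - φ z) / (x - z)) '' Set.Iio x)

variable {φ}

lemma lderiv_set_nonempty (x : ℝ) :
    ((fun z => (φ x - φ z) / (x - z)) '' Set.Iio x).Nonempty :=
  ⟨_, ⟨x - 1, by simp, rfl⟩⟩

lemma slope_le_of_lip {K : NNReal} (hlip : LipschitzWith K φ) {z x : ℝ} (hz : z < x) :
    (φ x - φ z) / (x - z) ≤ K := by
  rw [div_le_iff₀ (by linarith)]
  have := hlip.dist_le_mul x z
  rw [Real.dist_eq, Real.dist_eq] at this
  have h1 : φ x - φ z ≤ |φ x - φ z| := le_abs_self _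
  have h2 : |x - z| = x - z := abs_of_pos (by linarith)
  linarith [h2 ▸ this]

lemma lderiv_bddAbove {K : NNReal} (hlip : LipschitzWith K φ) (x : ℝ) :
    BddAbove ((fun z => (φ x - φ z) / (x - z)) '' Set.Iio x) :=
  ⟨K, by rintro _ ⟨z, hz, rfl⟩; exact slope_le_of_lip hlip hz⟩

lemma slope_le_lderiv {K : NNReal} (hlip : LipschitzWith K φ) {z x : ℝ} (hz : z < x) :
    (φ x - φ z) / (x - z) ≤ lderiv φ x :=
  le_csSup (lderiv_bddAbove hlip x) ⟨z, hz, rfl⟩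

lemma lderiv_le_slope (hconv : ConvexOn ℝ Set.univ φ) {K : NNReal}
    (hlip : LipschitzWith K φ) {x y : ℝ} (hxy : x < y) :
    lderiv φ x ≤ (φ y - φ x) / (y - x) := by
  apply csSup_le (lderiv_set_nonempty x)
  rintro _ ⟨z, hz, rfl⟩
  exact hconv.slope_mono_adjacent (Set.mem_univ z) (Set.mem_univ y) hz hxy

lemma lderiv_nonneg (hmono : Monotone φ) {K : NNReal} (hlip : LipschitzWith K φ) (x : ℝ) :
    0 ≤ lderiv φ x := by
  refine le_trans ?_ (slope_le_lderiv hlip (show x - 1 < x by linarith))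
  have h := hmono (show x - 1 ≤ x by linarith)
  have : x - (x-1) = 1 := by ring
  rw [this]
  simp only [div_one]
  linarith

lemma lderiv_le (hconv : ConvexOn ℝ Set.univ φ) {K : NNReal} (hlip : LipschitzWith K φ) (x : ℝ) :
    lderiv φ x ≤ K :=
  csSup_le (lderiv_set_nonempty x) (by rintro _ ⟨z, hz, rfl⟩; exact slope_le_of_lip hlip hz)

lemma lderiv_mono (hconv : ConvexOn ℝ Set.univ φ) {K : NNReal} (hlip : LipschitzWith K φ) :
    Monotone (lderiv φ) := by
  intro x y hxy
  rcases eq_or_lt_of_le hxy with rfl | h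
  · exact le_refl _
  · exact le_trans (lderiv_le_slope hconv hlip h) (slope_le_lderiv hlip h)

lemma lderiv_subgradient (hconv : ConvexOn ℝ Set.univ φ) {K : NNReal}
    (hlip : LipschitzWith K φ) (x y : ℝ) :
    φ x + lderiv φ x * (y - x) ≤ φ y := by
  rcases lt_trichotomy x y with h | rfl | h
  · have := lderiv_le_slope hconv hlip h
    rw [le_div_iff₀ (by linarith)] at this
    linarith
  · simp
  · have := slope_le_lderiv hlip h
    rw [div_le_iff₀ (by linarith)] at this
    nlinarith

end lderiv

theorem stmt9 (μ ν : Hsp) (hμ : μ ∈ coneC) (hν : ν ∈ coneC)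
    (hdual : ν - μ ∈ dualC)
    (φ : ℝ → ℝ) (hmono : Monotone φ) (hconv : ConvexOn ℝ Set.univ φ)
    (hlip : ∃ K : NNReal, LipschitzWith K φ) :
    ∫ s, φ (μ s) ∂mu0 ≤ ∫ s, φ (ν s) ∂mu0 := by
  obtain ⟨K, hlipK⟩ := hlip
  obtain ⟨g, hg_mono, hg_nonneg, hg_ae⟩ := hμ
  haveI : IsFiniteMeasure mu0 := by
    constructor
    rw [mu0, Measure.restrict_apply_univ, Real.volume_Ico]
    norm_num
  have hμint : Integrable (μ : ℝ → ℝ) mu0 := ((Lp.memLp μ).integrable (by norm_num))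
  have hνint : Integrable (ν : ℝ → ℝ) mu0 := ((Lp.memLp ν).integrable (by norm_num))
  have hφcont : Continuous φ := hlipK.continuous
  have hψmeas : Measurable (lderiv φ) := (lderiv_mono hconv hlipK).measurable
  have hρmeas : AEStronglyMeasurable (fun s => lderiv φ (μ s)) mu0 :=
    (hψmeas.comp_aemeasurable (Lp.aestronglyMeasurable μ).aemeasurable).aestronglyMeasurable
  have hρbd : ∀ s, ‖lderiv φ (μ s)‖ ≤ K := fun s => by
    rw [Real.norm_eq_abs, abs_le]
    constructor
    · have h1 := lderiv_nonneg hmono hlipK (μ s)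
      have : (0:ℝ) ≤ K := K.coe_nonneg
      linarith
    · exact lderiv_le hconv hlipK _
  have hρmem : MemLp (fun s => lderiv φ (μ s)) 2 mu0 :=
    MemLp.of_bound hρmeas K (Filter.Eventually.of_forall hρbd)
  set ρ : Hsp := hρmem.toLp _ with hρdef
  have hρae : (ρ : ℝ → ℝ) =ᵐ[mu0] fun s => lderiv φ (μ s) := hρmem.coeFn_toLp
  have hρcone : ρ ∈ coneC := by
    refine ⟨lderiv φ ∘ g, ?_, ?_, ?_⟩
    · intro a ha b hb hab
      exact lderiv_mono hconv hlipK (hg_mono ha hb hab)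
    · intro x _
      exact lderiv_nonneg hmono hlipK _
    · exact hρae.trans (hg_ae.mono fun s hs => by simp [Function.comp, hs])
  have h0 : 0 ≤ ∫ s, (ν s - μ s) * lderiv φ (μ s) ∂mu0 := by
    have hd := hdual ρ hρcone
    rw [L2.inner_def] at hd
    refine hd.trans_eq (integral_congr_ae ?_)
    filter_upwards [Lp.coeFn_sub ν μ, hρae] with s h1 h2
    rw [h1, h2]
    simp [RCLike.inner_apply, mul_comm]
  -- integrability
  have hsubint : Integrable (fun s => ν s - μ s) mu0 := hνint.sub hμint
  have h2int : Integrable (fun s => (ν s - μ s) * lderiv φ (μ s)) mu0 := by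
    have := hsubint.bdd_mul hρmeas (Filter.Eventually.of_forall hρbd)
    refine this.congr (Filter.Eventually.of_forall fun s => ?_)
    simp [mul_comm]
  have hφint : ∀ (f : Hsp), Integrable (fun s => φ (f s)) mu0 := by
    intro f
    have hfint : Integrable (f : ℝ → ℝ) mu0 := ((Lp.memLp f).integrable (by norm_num))
    refine Integrable.mono' ((integrable_const |φ 0|).add (hfint.abs.const_mul (K:ℝ)))
      (hφcont.comp_aestronglyMeasurable (Lp.aestronglyMeasurable f)) ?_
    refine Filter.Eventually.of_forall fun s => ?_
    have hd := hlipK.dist_le_mul (f s) 0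
    rw [Real.dist_eq, Real.dist_eq, sub_zero] at hd
    rw [Real.norm_eq_abs]
    calc |φ (f s)| ≤ |φ 0| + |φ (f s) - φ 0| := by
          have := abs_sub_abs_le_abs_sub (φ (f s)) (φ 0)
          linarith [abs_nonneg (φ (f s) - φ 0)]
      _ ≤ |φ 0| + K * |f s| := by linarith
  have key : ∫ s, (φ (μ s) + (ν s - μ s) * lderiv φ (μ s)) ∂mu0 ≤ ∫ s, φ (ν s) ∂mu0 := by
    refine integral_mono ((hφint μ).add h2int) (hφint ν) fun s => ?_
    have hsg := lderiv_subgradient hconv hlipK (μ s) (ν s)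
    simp only
    nlinarith [hsg]
  rw [integral_add (hφint μ) h2int] at key
  linarith
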